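/- Let (L, A) be a rational structure on a group G and H ≤ G a subgroup. If H is L-quasiconvex, then H is L-rational: the language L ∩ π^{-1}(H) is regular. -/
import Mathlib


def evalWord {A G : Type} [Group G] (a : A → G) (w : List A) : G :=
  (w.map a).prod

def IsRegularLang {A : Type} (L : Language A) : Prop :=
  ∃ (σ : Type) (_ : Fintype σ) (M : DFA A σ), M.accepts = L

theorem evalWord_append {A G : Type} [Group G] (a : A → G) (u v : List A) :
    evalWord a (u ++ v) = evalWord a u * evalWord a v := by
  simp [evalWord]

/-- An `L`-quasiconvex subgroup is `L`-rational. -/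
theorem rational_of_quasiconvex
    {A G : Type} [Fintype A] [Group G] (a : A → G)
    (hinv : ∀ x : A, ∃ y : A, a y = (a x)⁻¹)
    (L : Language A) (hreg : IsRegularLang L)
    (hsur : ∀ g : G, ∃ w ∈ L, evalWord a w = g)
    (H : Subgroup G)
    (hqc : ∃ K : ℕ, 0 < K ∧ ∀ w ∈ L, evalWord a w ∈ H → ∀ p : List A, p <+: w →
      ∃ u : List A, u.length ≤ K ∧ evalWord a (p ++ u) ∈ H) :
    IsRegularLang {w | w ∈ L ∧ evalWord a w ∈ H} := by
  classical
  obtain ⟨σ, instσ, M, hM⟩ := hreg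
  obtain ⟨K, hK, hq⟩ := hqc
  -- the finite set of cosets
  set S : Set (G ⧸ H) := {q | ∃ u : List A, u.length ≤ K ∧ q = QuotientGroup.mk (evalWord a u)}
    with hS
  have hSfin : S.Finite := by
    have hsub : S ⊆ (fun u : List A => (QuotientGroup.mk (evalWord a u) : G ⧸ H)) ''
        {u : List A | u.length ≤ K} := by
      rintro q ⟨u, hu, rfl⟩
      exact ⟨u, hu, rfl⟩
    exact ((List.finite_length_le A K).image _).subset hsub
  have hone : ((1 : G) : G ⧸ H) ∈ S := ⟨[], by simp, by simp [evalWord]⟩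
  haveI : Fintype ↥S := hSfin.fintype
  -- the product DFA
  let D : DFA A (σ × Option ↥S) :=
    { step := fun p x => (M.step p.1 x,
        p.2.bind (fun q => if h : ((a x)⁻¹ • (q : G ⧸ H)) ∈ S then some ⟨_, h⟩ else none)),
      start := (M.start, some ⟨((1 : G) : G ⧸ H), hone⟩),
      accept := {p | p.1 ∈ M.accept ∧ p.2.map Subtype.val = some ((1 : G) : G ⧸ H)} }
  have hstart : D.start = (M.start, some ⟨((1 : G) : G ⧸ H), hone⟩) := rfl
  have hstep2 : ∀ (p : σ × Option ↥S) (x : A), (D.step p x).2 =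
      p.2.bind (fun q => if h : ((a x)⁻¹ • (q : G ⧸ H)) ∈ S then some ⟨_, h⟩ else none) :=
    fun _ _ => rfl
  refine ⟨σ × Option ↥S, inferInstance, D, ?_⟩
  -- first component tracks M
  have hfst : ∀ (w : List A) (s : σ) (o : Option ↥S),
      (D.evalFrom (s, o) w).1 = M.evalFrom s w := by
    intro w
    induction w with
    | nil => intro s o; rfl
    | cons x w ih =>
      intro s o
      simp only [DFA.evalFrom, List.foldl_cons] at *
      exact ih _ _
  have hfst' : ∀ w : List A, (D.eval w).1 = M.eval w := fun w =>
    hfst w M.start (some ⟨((1 : G) : G ⧸ H), hone⟩)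
  -- second component, when alive, is the coset of (eval w)⁻¹
  have hsnd : ∀ (w : List A) (q : ↥S), (D.eval w).2 = some q →
      (q : G ⧸ H) = QuotientGroup.mk (evalWord a w)⁻¹ := by
    intro w
    induction w using List.reverseRecOn with
    | nil =>
      intro q hq
      simp only [DFA.eval, DFA.evalFrom, List.foldl_nil, hstart] at hq
      have hq' : q = ⟨((1 : G) : G ⧸ H), hone⟩ := by
        exact (Option.some_injective _ hq).symm
      rw [hq']
      simp [evalWord]
    | append_singleton w x ih =>
      intro q hq
      rw [DFA.eval, DFA.evalFrom_append_singleton, hstep2] at hq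
      rcases ho : (D.evalFrom D.start w).2 with _ | q'
      · rw [ho] at hq
        simp at hq
      · rw [ho, Option.bind_some] at hq
        have hval := ih q' ho
        split at hq
        · next h =>
          have hqv : (q : G ⧸ H) = (a x)⁻¹ • (q' : G ⧸ H) := by
            cases hq; rfl
          rw [hqv, hval]
          have he : (evalWord a (w ++ [x]))⁻¹ = (a x)⁻¹ * (evalWord a w)⁻¹ := by
            simp [evalWord_append, evalWord, mul_inv_rev]
          rw [he]
          rfl
        · simp at hq
  -- liveness along prefixes of accepted words
  have hlive : ∀ (w : List A), w ∈ L → evalWord a w ∈ H → ∀ p : List A, p <+: w →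
      (D.eval p).2.map Subtype.val = some ((QuotientGroup.mk (evalWord a p)⁻¹ : G ⧸ H)) := by
    intro w hw hwH p
    induction p using List.reverseRecOn with
    | nil =>
      intro _
      simp only [DFA.eval, DFA.evalFrom, List.foldl_nil, hstart]
      simp [evalWord]
    | append_singleton p x ih =>
      intro hpre
      have hpre' : p <+: w := (p.prefix_append [x]).trans hpre
      have ihv := ih hpre'
      rcases ho : (D.eval p).2 with _ | q'
      · rw [ho] at ihv; simp at ihv
      · rw [ho] at ihv
        simp only [Option.map_some] at ihv
        have hq' : (q' : G ⧸ H) = QuotientGroup.mk (evalWord a p)⁻¹ := by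
          simpa using ihv
        -- the new coset is in S by quasiconvexity
        obtain ⟨u, hu, huH⟩ := hq w hw hwH (p ++ [x]) hpre
        have hcoset : (a x)⁻¹ • (q' : G ⧸ H) =
            QuotientGroup.mk (evalWord a (p ++ [x]))⁻¹ := by
          rw [hq']
          have h1 : (a x)⁻¹ • (QuotientGroup.mk (evalWord a p)⁻¹ : G ⧸ H) =
              QuotientGroup.mk ((a x)⁻¹ • (evalWord a p)⁻¹) := MulAction.Quotient.smul_mk ..
          rw [h1]
          congr 1
          simp [evalWord_append, evalWord, mul_inv_rev, smul_eq_mul]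
        have hmem : ((a x)⁻¹ • (q' : G ⧸ H)) ∈ S := by
          refine ⟨u, hu, ?_⟩
          rw [hcoset]
          apply Quotient.sound'
          rw [QuotientGroup.leftRel_apply]
          have hh : (evalWord a ((p ++ [x]) ++ u)) ∈ H := huH
          rw [evalWord_append] at hh
          simpa [mul_assoc] using hh
        rw [DFA.eval, DFA.evalFrom_append_singleton, hstep2]
        have ho' : (D.evalFrom D.start p).2 = some q' := ho
        rw [ho', Option.bind_some, dif_pos hmem]
        simp only [Option.map_some]
        exact congrArg some hcoset
  -- conclude
  ext w
  rw [DFA.mem_accepts]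
  constructor
  · rintro ⟨h1, h2⟩
    have hwL : w ∈ L := by
      rw [← hM, DFA.mem_accepts]
      rw [← hfst' w]
      exact h1
    refine ⟨hwL, ?_⟩
    rcases ho : (D.eval w).2 with _ | q
    · rw [ho] at h2; simp at h2
    · rw [ho] at h2
      have hv := hsnd w q ho
      simp only [Option.map_some] at h2
      have h3 : (q : G ⧸ H) = ((1 : G) : G ⧸ H) := by simpa using h2
      rw [hv] at h3
      have := QuotientGroup.eq.mp h3
      simpa using this
  · rintro ⟨hwL, hwH⟩
    have h1 : (D.eval w).1 ∈ M.accept := by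
      rw [hfst' w, ← DFA.mem_accepts, hM]
      exact hwL
    have h2 := hlive w hwL hwH w w.prefix_refl
    refine ⟨h1, ?_⟩
    rw [h2]
    exact congrArg some (QuotientGroup.eq.mpr (by simpa using hwH))
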